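/- Let λ ≥ 0, ε ≥ 0 with ε − λ < −1, and set μ_n = (1+n)(1 + log(1+n))^λ and ν_n = 1 + log(1+n). Then there exist positive constants θ₃ and θ₄ such that for every m ≥ 1: θ₃ (1 + log(1+m))^{−λ + ε + 1} ≤ Σ_{k=m}^∞ μ_k^{−1} ν_k^ε ≤ θ₄ (1 + log(1+m))^{−λ + ε + 1}, where μ_k^{−1} ν_k^ε = (1+k)^{−1} (1 + log(1+k))^{−λ + ε}. -/

import Mathlib

open Real Filter Topology

private lemma mvt_rpow {q : ℝ} (hq : q < 0) {a b : ℝ} (ha : 1 ≤ a) (hab : a < b) :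
    (-q) * b ^ (q - 1) * (b - a) ≤ a ^ q - b ^ q ∧
      a ^ q - b ^ q ≤ (-q) * a ^ (q - 1) * (b - a) := by
  have ha0 : (0:ℝ) < a := lt_of_lt_of_le one_pos ha
  have hderiv : ∀ x ∈ Set.Ioo a b,
      HasDerivAt (fun x : ℝ => x ^ q) (q * x ^ (q - 1)) x := fun x hx =>
    Real.hasDerivAt_rpow_const (Or.inl (ne_of_gt (lt_trans ha0 hx.1)))
  have hcont : ContinuousOn (fun x : ℝ => x ^ q) (Set.Icc a b) := fun x hx =>
    (Real.hasDerivAt_rpow_const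
      (Or.inl (ne_of_gt (lt_of_lt_of_le ha0 hx.1)))).continuousAt.continuousWithinAt
  obtain ⟨c, hc, hceq⟩ := exists_hasDerivAt_eq_slope (fun x : ℝ => x ^ q)
    (fun x => q * x ^ (q - 1)) hab hcont hderiv
  have hba : (0:ℝ) < b - a := sub_pos.mpr hab
  have hceq' : q * c ^ (q - 1) * (b - a) = b ^ q - a ^ q := by
    have := hceq
    rw [this]
    field_simp
  have heq : a ^ q - b ^ q = (-q) * c ^ (q - 1) * (b - a) := by
    have h1 : (-q) * c ^ (q - 1) * (b - a) = -(q * c ^ (q - 1) * (b - a)) := by ring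
    rw [h1, hceq']
    ring
  have hc1 : c ^ (q - 1) ≤ a ^ (q - 1) :=
    Real.rpow_le_rpow_of_nonpos ha0 hc.1.le (by linarith)
  have hc2 : b ^ (q - 1) ≤ c ^ (q - 1) :=
    Real.rpow_le_rpow_of_nonpos (lt_trans ha0 hc.1) hc.2.le (by linarith)
  have hnq : (0:ℝ) ≤ -q := by linarith
  constructor
  · rw [heq]
    exact mul_le_mul_of_nonneg_right (mul_le_mul_of_nonneg_left hc2 hnq) hba.le
  · rw [heq]
    exact mul_le_mul_of_nonneg_right (mul_le_mul_of_nonneg_left hc1 hnq) hba.le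

private lemma step_bounds {p : ℝ} (hp : p < -1) {x : ℝ} (hx : 0 ≤ x) :
    (-(p+1)) * 2 ^ p / 2 * ((1+x)⁻¹ * (1 + Real.log (1+x)) ^ p) ≤
      (1 + Real.log (1+x)) ^ (p+1) - (1 + Real.log (2+x)) ^ (p+1) ∧
    (1 + Real.log (1+x)) ^ (p+1) - (1 + Real.log (2+x)) ^ (p+1) ≤
      (-(p+1)) * ((1+x)⁻¹ * (1 + Real.log (1+x)) ^ p) := by
  have h1x : (0:ℝ) < 1 + x := by linarith
  have h2x : (0:ℝ) < 2 + x := by linarith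
  set a := 1 + Real.log (1+x) with hadef
  set b := 1 + Real.log (2+x) with hbdef
  have hlog1 : 0 ≤ Real.log (1+x) := Real.log_nonneg (by linarith)
  have ha1 : 1 ≤ a := by rw [hadef]; linarith
  have ha0 : (0:ℝ) < a := lt_of_lt_of_le one_pos ha1
  have hab : a < b := by
    have := Real.log_lt_log h1x (by linarith : 1+x < 2+x)
    rw [hadef, hbdef]; linarith
  have hbpos : (0:ℝ) < b := lt_trans ha0 hab
  have hba_le : b - a ≤ (1+x)⁻¹ := by
    have hlog : Real.log ((2+x)/(1+x)) = Real.log (2+x) - Real.log (1+x) :=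
      Real.log_div h2x.ne' h1x.ne'
    have h2 := Real.log_le_sub_one_of_pos (by positivity : (0:ℝ) < (2+x)/(1+x))
    rw [hlog] at h2
    have h3 : (2+x)/(1+x) - 1 = (1+x)⁻¹ := by field_simp; norm_num
    rw [hadef, hbdef]; linarith
  have hba_ge : (2*(1+x))⁻¹ ≤ b - a := by
    have hlog : Real.log ((1+x)/(2+x)) = Real.log (1+x) - Real.log (2+x) :=
      Real.log_div h1x.ne' h2x.ne'
    have h2 := Real.log_le_sub_one_of_pos (by positivity : (0:ℝ) < (1+x)/(2+x))
    rw [hlog] at h2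
    have h3 : (1+x)/(2+x) - 1 = -(2+x)⁻¹ := by field_simp; norm_num
    have h4 : (2*(1+x))⁻¹ ≤ (2+x)⁻¹ := inv_anti₀ h2x (by linarith)
    rw [hadef, hbdef]; linarith
  have hb2a : b ≤ 2 * a := by
    have h5 : Real.log (2+x) ≤ Real.log (2*(1+x)) := Real.log_le_log h2x (by linarith)
    have h6 : Real.log (2*(1+x)) = Real.log 2 + Real.log (1+x) :=
      Real.log_mul two_ne_zero h1x.ne'
    have h7 : Real.log 2 ≤ 1 := by
      have := Real.log_le_sub_one_of_pos (by norm_num : (0:ℝ) < 2); linarith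
    rw [hadef, hbdef]; linarith
  obtain ⟨hlo, hhi⟩ := mvt_rpow (q := p+1) (by linarith) ha1 hab
  have hpe : p + 1 - 1 = p := by ring
  rw [hpe] at hlo hhi
  have hap : (0:ℝ) < a ^ p := Real.rpow_pos_of_pos ha0 p
  have hnq : (0:ℝ) ≤ -(p+1) := by linarith
  constructor
  · have hb_ge : (2:ℝ) ^ p * a ^ p ≤ b ^ p := by
      have := Real.rpow_le_rpow_of_nonpos hbpos hb2a (by linarith : p ≤ 0)
      rwa [Real.mul_rpow (by norm_num : (0:ℝ) ≤ 2) ha0.le] at this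
    have hmm : (2:ℝ) ^ p * a ^ p * (2*(1+x))⁻¹ ≤ b ^ p * (b - a) :=
      mul_le_mul hb_ge hba_ge (by positivity) (Real.rpow_pos_of_pos hbpos p).le
    calc (-(p+1)) * 2 ^ p / 2 * ((1+x)⁻¹ * a ^ p)
        = (-(p+1)) * ((2:ℝ) ^ p * a ^ p * (2*(1+x))⁻¹) := by
          rw [mul_inv]; ring
      _ ≤ (-(p+1)) * (b ^ p * (b - a)) := mul_le_mul_of_nonneg_left hmm hnq
      _ = (-(p+1)) * b ^ p * (b - a) := by ring
      _ ≤ a ^ (p+1) - b ^ (p+1) := hlo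
  · calc a ^ (p+1) - b ^ (p+1)
        ≤ (-(p+1)) * a ^ p * (b - a) := hhi
      _ ≤ (-(p+1)) * a ^ p * (1+x)⁻¹ :=
          mul_le_mul_of_nonneg_left hba_le (mul_nonneg hnq hap.le)
      _ = (-(p+1)) * ((1+x)⁻¹ * a ^ p) := by ring

private def tailEquiv (m : ℕ) : ℕ ≃ {k : ℕ // m ≤ k} :=
  ⟨fun n => ⟨m + n, Nat.le_add_right m n⟩, fun k => k.1 - m,
   fun n => by simp, fun k => Subtype.ext (Nat.add_sub_cancel' k.2)⟩

private lemma tail_bounds {p : ℝ} (hp : p < -1) (m : ℕ) :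
    Summable (fun k : {k : ℕ // m ≤ k} =>
        ((1 : ℝ) + (k.1 : ℝ))⁻¹ * (1 + Real.log (1 + (k.1 : ℝ))) ^ p) ∧
      (-(p+1))⁻¹ * (1 + Real.log (1 + (m : ℝ))) ^ (p+1) ≤
        ∑' k : {k : ℕ // m ≤ k},
          ((1 : ℝ) + (k.1 : ℝ))⁻¹ * (1 + Real.log (1 + (k.1 : ℝ))) ^ p ∧
      (∑' k : {k : ℕ // m ≤ k},
          ((1 : ℝ) + (k.1 : ℝ))⁻¹ * (1 + Real.log (1 + (k.1 : ℝ))) ^ p) ≤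
        ((-(p+1)) * 2 ^ p / 2)⁻¹ * (1 + Real.log (1 + (m : ℝ))) ^ (p+1) := by
  classical
  have hq0 : (0:ℝ) < -(p+1) := by linarith
  set F : ℕ → ℝ := fun k => ((1:ℝ)+(k:ℝ))⁻¹ * (1 + Real.log (1+(k:ℝ))) ^ p with hF
  set G : ℕ → ℝ := fun k => (1 + Real.log (1+(k:ℝ))) ^ (p+1) with hG
  set θ : ℝ := (-(p+1)) * 2 ^ p / 2 with hθ
  have hθpos : 0 < θ := by
    rw [hθ]
    exact div_pos (mul_pos hq0 (Real.rpow_pos_of_pos two_pos p)) two_pos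
  have hF0 : ∀ k : ℕ, 0 ≤ F k := by
    intro k
    have h1 : (0:ℝ) < 1 + (k:ℝ) := by positivity
    have h2 : 0 ≤ Real.log (1+(k:ℝ)) := Real.log_nonneg (by linarith)
    have h3 : (0:ℝ) < 1 + Real.log (1+(k:ℝ)) := by linarith
    rw [hF]
    positivity
  have key : ∀ k : ℕ, θ * F k ≤ G k - G (k+1) ∧ G k - G (k+1) ≤ (-(p+1)) * F k := by
    intro k
    have hGk1 : G (k+1) = (1 + Real.log (2+(k:ℝ))) ^ (p+1) := by
      have hc : ((k+1 : ℕ):ℝ) = (k:ℝ)+1 := by push_cast; ring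
      rw [hG]
      simp only [hc]
      rw [show (1:ℝ)+((k:ℝ)+1) = 2+(k:ℝ) from by ring]
    have := step_bounds hp (x := (k:ℝ)) (Nat.cast_nonneg k)
    rw [hGk1, hG, hF, hθ]
    exact this
  set d : ℕ → ℝ := fun n => G (m+n) - G (m+n+1) with hd
  have hd0 : ∀ n, 0 ≤ d n := fun n =>
    le_trans (mul_nonneg hθpos.le (hF0 (m+n))) (key (m+n)).1
  have hGtend : Tendsto (fun n : ℕ => G (m+n)) atTop (𝓝 0) := by
    have h0 : Tendsto (fun n : ℕ => ((m+n : ℕ):ℝ)) atTop atTop :=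
      tendsto_natCast_atTop_atTop.comp
        (tendsto_atTop_mono (fun n => Nat.le_add_left n m) tendsto_id)
    have h1 : Tendsto (fun n : ℕ => 1 + Real.log (1 + ((m+n : ℕ):ℝ))) atTop atTop :=
      tendsto_atTop_add_const_left atTop 1
        (Real.tendsto_log_atTop.comp (tendsto_atTop_add_const_left atTop 1 h0))
    have h2 : Tendsto (fun x : ℝ => x ^ (p+1)) atTop (𝓝 0) := by
      have := tendsto_rpow_neg_atTop (y := -(p+1)) hq0
      simpa using this
    exact h2.comp h1
  have hHasSum : HasSum d (G m) := by
    rw [hasSum_iff_tendsto_nat_of_nonneg hd0]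
    have hps : ∀ n : ℕ, ∑ i ∈ Finset.range n, d i = G m - G (m+n) := by
      intro n
      have := Finset.sum_range_sub' (fun i => G (m+i)) n
      simpa [hd, add_assoc] using this
    simp only [hps]
    simpa using tendsto_const_nhds.sub hGtend
  have hsum_d : Summable d := hHasSum.summable
  have hFle : ∀ n, F (m+n) ≤ θ⁻¹ * d n := by
    intro n
    have h1 := (key (m+n)).1
    have h2 : F (m+n) = θ⁻¹ * (θ * F (m+n)) :=
      (inv_mul_cancel_left₀ hθpos.ne' _).symm
    rw [h2]
    exact mul_le_mul_of_nonneg_left h1 (inv_nonneg.mpr hθpos.le)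
  have hsumF : Summable (fun n => F (m+n)) :=
    Summable.of_nonneg_of_le (fun n => hF0 _) hFle (hsum_d.mul_left θ⁻¹)
  have hle1 : G m ≤ (-(p+1)) * ∑' n, F (m+n) := by
    rw [← tsum_mul_left, ← hHasSum.tsum_eq]
    exact Summable.tsum_le_tsum (fun n => (key (m+n)).2) hsum_d (hsumF.mul_left _)
  have hle2 : θ * ∑' n, F (m+n) ≤ G m := by
    rw [← tsum_mul_left, ← hHasSum.tsum_eq]
    exact Summable.tsum_le_tsum (fun n => (key (m+n)).1) (hsumF.mul_left _) hsum_d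
  let e := tailEquiv m
  have hsub : Summable (fun k : {k : ℕ // m ≤ k} => F k.1) := by
    rw [← Equiv.summable_iff e]
    exact hsumF
  have htsub : (∑' k : {k : ℕ // m ≤ k}, F k.1) = ∑' n, F (m+n) := by
    rw [← Equiv.tsum_eq e (fun k : {k : ℕ // m ≤ k} => F k.1)]
    exact tsum_congr fun n => rfl
  have hGm : (1 + Real.log (1 + (m : ℝ))) ^ (p+1) = G m := rfl
  refine ⟨hsub, ?_, ?_⟩
  · show (-(p+1))⁻¹ * (1 + Real.log (1 + (m : ℝ))) ^ (p+1) ≤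
      ∑' k : {k : ℕ // m ≤ k}, F k.1
    rw [htsub, hGm]
    have h1 : (-(p+1))⁻¹ * ((-(p+1)) * ∑' n, F (m+n)) = ∑' n, F (m+n) :=
      inv_mul_cancel_left₀ hq0.ne' _
    have h2 := mul_le_mul_of_nonneg_left hle1 (inv_nonneg.mpr hq0.le)
    linarith
  · show (∑' k : {k : ℕ // m ≤ k}, F k.1) ≤
      θ⁻¹ * (1 + Real.log (1 + (m : ℝ))) ^ (p+1)
    rw [htsub, hGm]
    have h1 : θ⁻¹ * (θ * ∑' n, F (m+n)) = ∑' n, F (m+n) :=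
      inv_mul_cancel_left₀ hθpos.ne' _
    have h2 := mul_le_mul_of_nonneg_left hle2 (inv_nonneg.mpr hθpos.le)
    linarith

/-- two-sided tail estimates in the logarithmic example when `aq = -1`
and `ε - λ < -1`. -/
theorem log_example_tail_estimates_critical (lam ε : ℝ)
    (hlam : 0 ≤ lam) (hε : 0 ≤ ε) (h : ε - lam < -1) :
    ∃ θ₃ θ₄ : ℝ, 0 < θ₃ ∧ 0 < θ₄ ∧ ∀ m : ℕ, 1 ≤ m →
      Summable (fun k : {k : ℕ // m ≤ k} =>
        ((1 : ℝ) + (k.1 : ℝ))⁻¹ * (1 + Real.log (1 + (k.1 : ℝ))) ^ (-lam + ε)) ∧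
      θ₃ * (1 + Real.log (1 + (m : ℝ))) ^ (-lam + ε + 1) ≤
        ∑' k : {k : ℕ // m ≤ k},
          ((1 : ℝ) + (k.1 : ℝ))⁻¹ * (1 + Real.log (1 + (k.1 : ℝ))) ^ (-lam + ε) ∧
      ∑' k : {k : ℕ // m ≤ k},
          ((1 : ℝ) + (k.1 : ℝ))⁻¹ * (1 + Real.log (1 + (k.1 : ℝ))) ^ (-lam + ε) ≤
        θ₄ * (1 + Real.log (1 + (m : ℝ))) ^ (-lam + ε + 1) := by
  have hp : -lam + ε < -1 := by linarith
  refine ⟨(-(-lam + ε + 1))⁻¹, ((-(-lam + ε + 1)) * 2 ^ (-lam + ε) / 2)⁻¹, ?_, ?_, ?_⟩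
  · exact inv_pos.mpr (by linarith)
  · exact inv_pos.mpr
      (div_pos (mul_pos (by linarith) (Real.rpow_pos_of_pos two_pos _)) two_pos)
  · intro m _
    exact tail_bounds hp m
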